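/- Let λ = a + ib be a complex number and σ ∈ E a unit vector with σ ≠ ω. Then f_λ⁻(σ) := Ψ⁻¹(F_λ(Φ(σ))) = [(a²+b²+1) + (a²+b²−1)⟨σ,ω⟩]⁻¹ · ( 2aσ − 2b(σ×ω) − 2a⟨σ,ω⟩ω − [(a²+b²−1) + (a²+b²+1)⟨σ,ω⟩]ω ); in particular f_λ⁻(σ) = f_λ⁺(σ) − 2⟨f_λ⁺(σ),ω⟩ω, i.e. the points f_λ⁻(σ) and f_λ⁺(σ) := Φ⁻¹(F_λ(Φ(σ))) are symmetric with respect to the plane ω^⊥. -/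

import Mathlib

open scoped RealInnerProductSpace

section Aux

variable {E : Type*} [NormedAddCommGroup E] [InnerProductSpace ℝ E]
  [Fact (Module.finrank ℝ E = 3)] (o : Orientation ℝ E (Fin 3))
  (cross : E →ₗ[ℝ] E →ₗ[ℝ] E)
  (hcross : ∀ x y z : E, ⟪cross x y, z⟫ = o.volumeForm ![x, y, z])

include hcross

lemma aux_inner_cross_left (u v : E) : ⟪cross u v, u⟫ = 0 := by
  rw [hcross]
  exact o.volumeForm.map_eq_zero_of_eq ![u, v, u] (by simp) (by decide : (0 : Fin 3) ≠ 2)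

lemma aux_inner_cross_right (u v : E) : ⟪cross u v, v⟫ = 0 := by
  rw [hcross]
  exact o.volumeForm.map_eq_zero_of_eq ![u, v, v] (by simp) (by decide : (1 : Fin 3) ≠ 2)

lemma aux_cross_antisymm (u v : E) : cross u v = -cross v u := by
  refine ext_inner_right ℝ fun z => ?_
  rw [hcross, inner_neg_left, hcross]
  have h : ![v, u, z] = ![u, v, z] ∘ Equiv.swap (0 : Fin 3) 1 := by
    funext i
    fin_cases i <;> simp [Equiv.swap_apply_left, Equiv.swap_apply_right,
      Equiv.swap_apply_of_ne_of_ne]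
  rw [h, o.volumeForm.map_swap _ (by decide : (0 : Fin 3) ≠ 1), neg_neg]

lemma aux_cross_self (u : E) : cross u u = 0 := by
  have h := hcross u u (cross u u)
  rw [o.volumeForm.map_eq_zero_of_eq ![u, u, cross u u] (by simp)
    (by decide : (0 : Fin 3) ≠ 1)] at h
  exact inner_self_eq_zero.mp h

lemma aux_norm_cross (u v : E) (hu : ‖u‖ = 1) (huv : ⟪u, v⟫ = 0) :
    ‖cross u v‖ = ‖v‖ := by
  haveI : FiniteDimensional ℝ E := .of_fact_finrank_eq_succ 2
  set c := cross u v with hc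
  have hcu : ⟪c, u⟫ = 0 := aux_inner_cross_left o cross hcross u v
  have hcv : ⟪c, v⟫ = 0 := aux_inner_cross_right o cross hcross u v
  by_cases hc0 : c = 0
  · -- show v = 0
    classical
    set K := Submodule.span ℝ ({u, v} : Set E) with hK
    have hK2 : Module.finrank ℝ K ≤ 2 := by
      refine (finrank_span_le_card _).trans ?_
      simp only [Set.toFinset_insert, Set.toFinset_singleton]
      exact (Finset.card_insert_le _ _).trans (by simp)
    have hsum := K.finrank_add_finrank_orthogonal
    rw [Fact.out (p := Module.finrank ℝ E = 3)] at hsum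
    have hbot : Kᗮ ≠ ⊥ := by
      intro h
      rw [h, finrank_bot] at hsum
      omega
    obtain ⟨x, hxK, hx0⟩ := Submodule.exists_mem_ne_zero_of_ne_bot hbot
    have hxu : ⟪u, x⟫ = 0 := hxK u (Submodule.subset_span (by simp))
    have hxv : ⟪v, x⟫ = 0 := hxK v (Submodule.subset_span (by simp))
    have hpair : Pairwise fun i j => ⟪![u, v, x] i, ![u, v, x] j⟫ = 0 := by
      intro i j hij
      fin_cases i <;> fin_cases j <;>
        simp_all [real_inner_comm x u, real_inner_comm x v, real_inner_comm v u]
    have habs := o.abs_volumeForm_apply_of_pairwise_orthogonal hpair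
    have hvol : o.volumeForm ![u, v, x] = 0 := by
      rw [← hcross u v x, ← hc, hc0, inner_zero_left]
    rw [hvol, Fin.prod_univ_three] at habs
    simp only [Matrix.cons_val_zero, Matrix.cons_val_one, Matrix.head_cons, abs_zero,
      Matrix.cons_val_two, Matrix.tail_cons, hu, one_mul] at habs
    have hv0 : v = 0 := by
      rcases mul_eq_zero.mp habs.symm with h | h
      · exact norm_eq_zero.mp h
      · exact absurd (norm_eq_zero.mp h) hx0
    rw [hc0, hv0]
  · have hpair : Pairwise fun i j => ⟪![u, v, c] i, ![u, v, c] j⟫ = 0 := by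
      intro i j hij
      fin_cases i <;> fin_cases j <;>
        simp_all [real_inner_comm (cross u v) u, real_inner_comm (cross u v) v, real_inner_comm v u]
    have habs := o.abs_volumeForm_apply_of_pairwise_orthogonal hpair
    have hvol : o.volumeForm ![u, v, c] = ‖c‖ ^ 2 := by
      rw [← hcross u v c, ← hc, real_inner_self_eq_norm_sq]
    rw [hvol, Fin.prod_univ_three] at habs
    simp only [Matrix.cons_val_zero, Matrix.cons_val_one, Matrix.head_cons,
      Matrix.cons_val_two, Matrix.tail_cons, hu, one_mul, abs_of_nonneg (sq_nonneg ‖c‖)] at habs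
    have hcn : ‖c‖ ≠ 0 := norm_ne_zero_iff.mpr hc0
    have : ‖c‖ * ‖c‖ = ‖v‖ * ‖c‖ := by rw [← sq]; linarith [habs]
    exact mul_right_cancel₀ hcn this

end Aux




open scoped RealInnerProductSpace

/-- The stereographic projection of the unit sphere of `E` from the point `ω` onto the plane
`ω^⊥`: `Φ(σ) = (σ − ⟨σ,ω⟩ω)/(1 − ⟨σ,ω⟩)`. -/
noncomputable def sproj {E : Type*} [NormedAddCommGroup E] [InnerProductSpace ℝ E]
    (ω σ : E) : E :=
  (1 - ⟪σ, ω⟫)⁻¹ • (σ - ⟪σ, ω⟫ • ω)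

/-- The inverse stereographic projection from the point `ω`:
`Φ⁻¹(ζ) = (2ζ + (‖ζ‖² − 1)ω)/(‖ζ‖² + 1)`. -/
noncomputable def sprojInv {E : Type*} [NormedAddCommGroup E] [InnerProductSpace ℝ E]
    (ω ζ : E) : E :=
  (‖ζ‖ ^ 2 + 1)⁻¹ • ((2 : ℝ) • ζ + (‖ζ‖ ^ 2 - 1) • ω)

/-- The inverse stereographic projection from the point `−ω`:
`Ψ⁻¹(ζ) = (2ζ + (1 − ‖ζ‖²)ω)/(‖ζ‖² + 1)`. -/
noncomputable def sprojInvNeg {E : Type*} [NormedAddCommGroup E] [InnerProductSpace ℝ E]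
    (ω ζ : E) : E :=
  (‖ζ‖ ^ 2 + 1)⁻¹ • ((2 : ℝ) • ζ + (1 - ‖ζ‖ ^ 2) • ω)

/-- Let `E` be a 3-dimensional oriented real inner product space with cross
product `×`, `ω ∈ E` a unit vector, `λ = a + ib ∈ ℂ` and `F_λ(ζ) = aζ + b(ω×ζ)` on `ω^⊥`.
Then for every unit vector `σ ≠ ω`,
`f_λ⁻(σ) := Ψ⁻¹(F_λ(Φ(σ))) = [(a²+b²+1) + (a²+b²−1)⟨σ,ω⟩]⁻¹ ·
  ( 2aσ − 2b(σ×ω) − 2a⟨σ,ω⟩ω − [(a²+b²−1) + (a²+b²+1)⟨σ,ω⟩]ω )`;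
in particular `f_λ⁻(σ) = f_λ⁺(σ) − 2⟨f_λ⁺(σ),ω⟩ω`, i.e. `f_λ⁻(σ)` and
`f_λ⁺(σ) := Φ⁻¹(F_λ(Φ(σ)))` are symmetric with respect to the plane `ω^⊥`. -/
theorem stmt_14 {E : Type*} [NormedAddCommGroup E] [InnerProductSpace ℝ E]
    [Fact (Module.finrank ℝ E = 3)]
    (o : Orientation ℝ E (Fin 3))
    (cross : E →ₗ[ℝ] E →ₗ[ℝ] E)
    (hcross : ∀ x y z : E, ⟪cross x y, z⟫ = o.volumeForm ![x, y, z])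
    (ω : E) (hω : ‖ω‖ = 1)
    (a b : ℝ) (σ : E) (hσ : ‖σ‖ = 1) (hσω : σ ≠ ω) :
    sprojInvNeg ω (a • sproj ω σ + b • cross ω (sproj ω σ)) =
      ((a ^ 2 + b ^ 2 + 1) + (a ^ 2 + b ^ 2 - 1) * ⟪σ, ω⟫)⁻¹ •
        ((2 * a) • σ - (2 * b) • cross σ ω - (2 * a * ⟪σ, ω⟫) • ω -
          ((a ^ 2 + b ^ 2 - 1) + (a ^ 2 + b ^ 2 + 1) * ⟪σ, ω⟫) • ω) ∧
    sprojInvNeg ω (a • sproj ω σ + b • cross ω (sproj ω σ)) =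
      sprojInv ω (a • sproj ω σ + b • cross ω (sproj ω σ)) -
        (2 * ⟪sprojInv ω (a • sproj ω σ + b • cross ω (sproj ω σ)), ω⟫) • ω := by
  set t : ℝ := ⟪σ, ω⟫ with ht
  have ht1 : t ≠ 1 := fun h => hσω ((inner_eq_one_iff_of_norm_eq_one (𝕜 := ℝ) hσ hω).mp (ht ▸ h))
  have htabs : |t| ≤ 1 := by
    have := abs_real_inner_le_norm σ ω
    rw [hσ, hω, one_mul] at this
    rw [ht]; exact this
  have ht1' : (0 : ℝ) < 1 - t := by
    rcases (abs_le.mp htabs) with ⟨h1, h2⟩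
    have := lt_of_le_of_ne h2 ht1
    linarith
  have htneg : (0 : ℝ) ≤ 1 + t := by linarith [(abs_le.mp htabs).1]
  have ht0 : (1 : ℝ) - t ≠ 0 := ne_of_gt ht1'
  have hωω : ⟪ω, ω⟫ = 1 := by rw [real_inner_self_eq_norm_sq, hω]; norm_num
  have hσσ : ⟪σ, σ⟫ = 1 := by rw [real_inner_self_eq_norm_sq, hσ]; norm_num
  set ζ : E := sproj ω σ with hζdef
  have hζ : ζ = (1 - t)⁻¹ • (σ - t • ω) := by rw [hζdef]; simp only [sproj, ← ht]
  have hωσ : ⟪ω, σ⟫ = t := by rw [real_inner_comm]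
  have hζω : ⟪ζ, ω⟫ = 0 := by
    rw [hζ, real_inner_smul_left, inner_sub_left, real_inner_smul_left, hωω, ← ht]
    ring
  have hnζ : ‖ζ‖ ^ 2 = (1 + t) / (1 - t) := by
    rw [← real_inner_self_eq_norm_sq, hζ]
    simp only [real_inner_smul_left, real_inner_smul_right, inner_sub_left, inner_sub_right,
      hσσ, hωω, hωσ, ← ht]
    field_simp
    ring
  have hcross0 : cross ω ω = 0 := aux_cross_self o cross hcross ω
  have hcζ : cross ω ζ = (1 - t)⁻¹ • cross ω σ := by
    rw [hζ, map_smul, map_sub, map_smul, hcross0, smul_zero, sub_zero]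
  have hncζ : ‖cross ω ζ‖ = ‖ζ‖ :=
    aux_norm_cross o cross hcross ω ζ hω (by rw [real_inner_comm]; exact hζω)
  have hcζω : ⟪cross ω ζ, ω⟫ = 0 := by
    rw [hcζ, real_inner_smul_left, aux_inner_cross_left o cross hcross ω σ, mul_zero]
  have hcζζ : ⟪ζ, cross ω ζ⟫ = 0 := by
    rw [real_inner_comm]; exact aux_inner_cross_right o cross hcross ω ζ
  have hcζζ' : ⟪cross ω ζ, ζ⟫ = 0 := aux_inner_cross_right o cross hcross ω ζ
  have hζself : ⟪ζ, ζ⟫ = (1 + t) / (1 - t) := by rw [real_inner_self_eq_norm_sq, hnζ]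
  have hcζself : ⟪cross ω ζ, cross ω ζ⟫ = (1 + t) / (1 - t) := by
    rw [real_inner_self_eq_norm_sq, hncζ, hnζ]
  set F : E := a • ζ + b • cross ω ζ with hF
  have hFω : ⟪F, ω⟫ = 0 := by
    rw [hF, inner_add_left, real_inner_smul_left, real_inner_smul_left, hζω, hcζω]
    ring
  have hnF : ‖F‖ ^ 2 = (a ^ 2 + b ^ 2) * ((1 + t) / (1 - t)) := by
    rw [← real_inner_self_eq_norm_sq, hF]
    simp only [inner_add_left, inner_add_right, real_inner_smul_left, real_inner_smul_right,
      hcζζ, hcζζ', hζself, hcζself]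
    ring
  have hD : (0 : ℝ) < (a ^ 2 + b ^ 2 + 1) + (a ^ 2 + b ^ 2 - 1) * t := by
    nlinarith [mul_nonneg (add_nonneg (sq_nonneg a) (sq_nonneg b)) htneg]
  have hD' : (a ^ 2 + b ^ 2 + 1) + (a ^ 2 + b ^ 2 - 1) * t ≠ 0 := ne_of_gt hD
  have hden : (a ^ 2 + b ^ 2) * ((1 + t) / (1 - t)) + 1 ≠ 0 := by
    have h1 : (0 : ℝ) ≤ (a ^ 2 + b ^ 2) * ((1 + t) / (1 - t)) :=
      mul_nonneg (add_nonneg (sq_nonneg a) (sq_nonneg b)) (div_nonneg htneg ht1'.le)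
    linarith
  have hanti : cross ω σ = -cross σ ω := aux_cross_antisymm o cross hcross ω σ
  constructor
  · simp only [sprojInvNeg]
    rw [hnF, hF, hcζ, hζ, hanti]
    have hE : (a ^ 2 + b ^ 2) * ((1 + t) / (1 - t)) + 1 = ((a ^ 2 + b ^ 2 + 1) + (a ^ 2 + b ^ 2 - 1) * t) / (1 - t) := by
      field_simp; ring
    rw [hE]
    match_scalars <;> field_simp <;> ring
  · have hn1 : ‖F‖ ^ 2 + 1 ≠ 0 := by positivity
    have hIω : ⟪sprojInv ω F, ω⟫ = (‖F‖ ^ 2 + 1)⁻¹ * (‖F‖ ^ 2 - 1) := by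
      simp only [sprojInv, inner_add_left, real_inner_smul_left, hFω, hωω]
      ring
    rw [hIω]
    simp only [sprojInvNeg, sprojInv]
    match_scalars <;> field_simp <;> ring
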